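/- The pair (r, r+1) with r = 3²·5²·7⁵·11³·59·71²·101·127·173²·197·199 and r+1 = 2¹⁰·13·17²·23·37²·41·47·61·79·107²·113²·137 is a 199-smooth twin; that is, the second product equals the first product plus one, and every prime factor appearing is at most 199. -/

import Mathlib

/-- The explicit 95-bit 199-smooth twin: the two products are consecutive integers and their
product has all prime factors at most `199`. -/
theorem stmt_8 :
    (2 ^ 10 * 13 * 17 ^ 2 * 23 * 37 ^ 2 * 41 * 47 * 61 * 79 * 107 ^ 2 * 113 ^ 2 * 137 : ℕ) =
      3 ^ 2 * 5 ^ 2 * 7 ^ 5 * 11 ^ 3 * 59 * 71 ^ 2 * 101 * 127 * 173 ^ 2 * 197 * 199 + 1 ∧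
    (∀ q : ℕ, q.Prime →
      q ∣ (3 ^ 2 * 5 ^ 2 * 7 ^ 5 * 11 ^ 3 * 59 * 71 ^ 2 * 101 * 127 * 173 ^ 2 * 197 * 199) *
          (2 ^ 10 * 13 * 17 ^ 2 * 23 * 37 ^ 2 * 41 * 47 * 61 * 79 * 107 ^ 2 * 113 ^ 2 * 137) →
      q ≤ 199) := by
  constructor
  · norm_num
  · intro q hq h
    simp only [pow_succ, pow_zero, one_mul, hq.dvd_mul, or_self] at h
    casesm* _ ∨ _ <;>
      { exact le_trans (Nat.le_of_dvd (by norm_num) h) (by norm_num) }
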